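/- Let n ≥ 1, let U be an invertible n × n matrix over 𝔽₂ = ZMod 2 with F := U⁻¹ and F(i) := {k : F_{i,k} = 1}, and let m_U be the 2^n × 2^n permutation matrix with m_U e_f = e_{U f} for f ∈ 𝔽₂ⁿ. Let a_i := Z^{⊗i} ⊗ σ⁻ ⊗ I^{⊗(n−1−i)} be the n-qubit Jordan–Wigner annihilation operators. Then for all i ≠ j, the conjugated interaction operator satisfies m_U · (a_i)† a_i (a_j)† a_j · m_U† = ¼ ( I − Z_{F(i)} − Z_{F(j)} + Z_{F(i) △ F(j)} ), where in particular Z_{F(i)} Z_{F(j)} = Z_{F(i) △ F(j)}. -/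

import Mathlib

open Matrix Finset
open scoped symmDiff

namespace FQ

/-- Pauli X. -/
noncomputable def X : Matrix (ZMod 2) (ZMod 2) ℂ := !![0, 1; 1, 0]

/-- Pauli Y. -/
noncomputable def Y : Matrix (ZMod 2) (ZMod 2) ℂ := !![0, -Complex.I; Complex.I, 0]

/-- Pauli Z. -/
noncomputable def Z : Matrix (ZMod 2) (ZMod 2) ℂ := !![1, 0; 0, -1]

/-- Tensor product `M 0 ⊗ M 1 ⊗ ⋯ ⊗ M (n-1)` of a family of single-qubit operators, as a
`2^n × 2^n` matrix indexed by functions `Fin n → ZMod 2`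
(the identification of `(ℂ²)^⊗n` with `ℂ^(2^n)`). -/
noncomputable def tens {n : ℕ} (M : Fin n → Matrix (ZMod 2) (ZMod 2) ℂ) :
    Matrix (Fin n → ZMod 2) (Fin n → ZMod 2) ℂ :=
  Matrix.of fun f g => ∏ i, M i (f i) (g i)

/-- The lowering operator `σ⁻ = (X + iY)/2`. -/
noncomputable def σm : Matrix (ZMod 2) (ZMod 2) ℂ := !![0, 1; 0, 0]

/-- The `n`-qubit Jordan–Wigner annihilation operators: `ann n i = Z^⊗i ⊗ σ⁻ ⊗ I^⊗(n-1-i)`. -/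
noncomputable def ann (n i : ℕ) : Matrix (Fin n → ZMod 2) (Fin n → ZMod 2) ℂ :=
  tens fun j => if (j : ℕ) < i then Z else if (j : ℕ) = i then σm else 1

/-- The Pauli string `X_S`: Pauli `X` on each tensor factor in `S`, identity elsewhere. -/
noncomputable def Xstr {n : ℕ} (S : Finset (Fin n)) :
    Matrix (Fin n → ZMod 2) (Fin n → ZMod 2) ℂ :=
  tens fun j => if j ∈ S then X else 1

/-- The Pauli string `Y_S`: Pauli `Y` on each tensor factor in `S`, identity elsewhere. -/
noncomputable def Ystr {n : ℕ} (S : Finset (Fin n)) :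
    Matrix (Fin n → ZMod 2) (Fin n → ZMod 2) ℂ :=
  tens fun j => if j ∈ S then Y else 1

/-- The Pauli string `Z_S`: Pauli `Z` on each tensor factor in `S`, identity elsewhere. -/
noncomputable def Zstr {n : ℕ} (S : Finset (Fin n)) :
    Matrix (Fin n → ZMod 2) (Fin n → ZMod 2) ℂ :=
  tens fun j => if j ∈ S then Z else 1

/-- The `2^n × 2^n` permutation matrix `m_U` of the linear encoding determined by
`U ∈ GL_n(𝔽₂)`, sending the basis vector `e_f` to `e_{U f}`. -/
noncomputable def encMat {n : ℕ} (U : Matrix (Fin n) (Fin n) (ZMod 2)) :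
    Matrix (Fin n → ZMod 2) (Fin n → ZMod 2) ℂ :=
  Matrix.of fun g f => if g = U.mulVec f then 1 else 0

/-- `U(i) = {k : U_{k,i} = 1}`, the set of row indices of nonzero elements of the `i`-th
column of `U`. -/
def colSet {n : ℕ} (U : Matrix (Fin n) (Fin n) (ZMod 2)) (i : Fin n) : Finset (Fin n) :=
  Finset.univ.filter fun k => U k i = 1

/-- `F(i) = {k : F_{i,k} = 1}`, the set of column indices of nonzero elements of the `i`-th
row of `F`. -/
def rowSet {n : ℕ} (F : Matrix (Fin n) (Fin n) (ZMod 2)) (i : Fin n) : Finset (Fin n) :=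
  Finset.univ.filter fun k => F i k = 1

/-- `rowSet` with a natural-number index (junk value `∅` out of range). -/
def rowSetN {n : ℕ} (F : Matrix (Fin n) (Fin n) (ZMod 2)) (i : ℕ) : Finset (Fin n) :=
  if h : i < n then rowSet F ⟨i, h⟩ else ∅

/-- `P(i) = F(0) △ F(1) △ ⋯ △ F(i−1)`, the iterated symmetric difference of the rows of `F`. -/
def Pset {n : ℕ} (F : Matrix (Fin n) (Fin n) (ZMod 2)) : ℕ → Finset (Fin n)
  | 0 => ∅
  | i + 1 => Pset F i ∆ rowSetN F i

/-- `R(i) = P(i) △ F(i)`. -/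
def Rset {n : ℕ} (F : Matrix (Fin n) (Fin n) (ZMod 2)) (i : ℕ) : Finset (Fin n) :=
  Pset F i ∆ rowSetN F i

-- auxiliaries (proved earlier)
noncomputable def ε : ZMod 2 → ℂ := fun a => if a = 0 then 1 else -1
noncomputable def χ : ZMod 2 → ℂ := fun a => if a = 1 then 1 else 0

lemma zmod2_cases (a : ZMod 2) : a = 0 ∨ a = 1 := by revert a; decide
@[simp] lemma Z_00 : Z 0 0 = 1 := rfl
@[simp] lemma Z_01 : Z 0 1 = 0 := rfl
@[simp] lemma Z_10 : Z 1 0 = 0 := rfl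
@[simp] lemma Z_11 : Z 1 1 = -1 := rfl
@[simp] lemma sm_00 : σm 0 0 = 0 := rfl
@[simp] lemma sm_01 : σm 0 1 = 1 := rfl
@[simp] lemma sm_10 : σm 1 0 = 0 := rfl
@[simp] lemma sm_11 : σm 1 1 = 0 := rfl
lemma zmod2_sum (f : ZMod 2 → ℂ) : ∑ x : ZMod 2, f x = f 0 + f 1 := Fin.sum_univ_two f
lemma Z_eq : Z = Matrix.diagonal ε := by
  ext a b; rcases zmod2_cases a with rfl | rfl <;> rcases zmod2_cases b with rfl | rfl <;> simp [ε, Matrix.diagonal]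
lemma Z_conjT : Zᴴ = Z := by
  ext a b; rcases zmod2_cases a with rfl | rfl <;> rcases zmod2_cases b with rfl | rfl <;> simp [Matrix.conjTranspose_apply]
lemma sm_conj : σmᴴ * σm = Matrix.diagonal χ := by
  ext a b
  rcases zmod2_cases a with rfl | rfl <;> rcases zmod2_cases b with rfl | rfl <;>
    simp [χ, Matrix.mul_apply, Matrix.diagonal, zmod2_sum]
lemma ZZ : Z * Z = 1 := by
  ext a b
  rcases zmod2_cases a with rfl | rfl <;> rcases zmod2_cases b with rfl | rfl <;> simp [Matrix.mul_apply, zmod2_sum, Matrix.one_apply]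
lemma eps_add (a b : ZMod 2) : ε (a + b) = ε a * ε b := by
  rcases zmod2_cases a with rfl | rfl <;> rcases zmod2_cases b with rfl | rfl <;> norm_num [ε, show (1 + 1 : ZMod 2) = 0 from rfl] <;> decide
lemma chi_mul (a b : ZMod 2) : χ a * χ b = (1/4 : ℂ) * (1 - ε a - ε b + ε a * ε b) := by
  rcases zmod2_cases a with rfl | rfl <;> rcases zmod2_cases b with rfl | rfl <;> norm_num [ε, χ]
lemma eps_sq (a : ZMod 2) : ε a * ε a = 1 := by rcases zmod2_cases a with rfl | rfl <;> norm_num [ε]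

lemma tens_mul {n : ℕ} (M N : Fin n → Matrix (ZMod 2) (ZMod 2) ℂ) :
    tens M * tens N = tens fun i => M i * N i := by
  ext f g
  simp only [tens, Matrix.mul_apply, Matrix.of_apply]
  rw [Fintype.prod_sum fun i b => M i (f i) b * N i b (g i)]
  exact Finset.sum_congr rfl fun h _ => (Finset.prod_mul_distrib).symm
lemma tens_conjTranspose {n : ℕ} (M : Fin n → Matrix (ZMod 2) (ZMod 2) ℂ) :
    (tens M)ᴴ = tens fun i => (M i)ᴴ := by
  ext f g
  simp only [tens, Matrix.conjTranspose_apply, Matrix.of_apply]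
  exact map_prod (starRingEnd ℂ) _ _
lemma tens_diagonal {n : ℕ} (d : Fin n → ZMod 2 → ℂ) :
    tens (fun i => Matrix.diagonal (d i)) = Matrix.diagonal fun f => ∏ i, d i (f i) := by
  ext f g
  by_cases h : f = g
  · subst h; simp [tens, Matrix.diagonal]
  · obtain ⟨k, hk⟩ := Function.ne_iff.mp h
    simp only [tens, Matrix.of_apply, Matrix.diagonal_apply, if_neg h]
    exact Finset.prod_eq_zero (Finset.mem_univ k) (by simp [Matrix.diagonal_apply, hk])

-- new pieces
lemma ann_conj {n : ℕ} (i : Fin n) :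
    (ann n i)ᴴ * ann n i =
      tens fun k => Matrix.diagonal fun a => if k = i then χ a else 1 := by
  rw [ann, tens_conjTranspose, tens_mul]
  refine congrArg tens ?_
  funext k
  by_cases h1 : (k : ℕ) < (i : ℕ)
  · have hne : k ≠ i := fun h => by subst h; exact lt_irrefl _ h1
    simp only [if_pos h1, Z_conjT, ZZ]
    ext a b; simp [Matrix.one_apply, Matrix.diagonal_apply, hne]
  · by_cases h2 : (k : ℕ) = (i : ℕ)
    · have he : k = i := Fin.val_injective h2
      simp only [if_neg h1, if_pos h2, sm_conj]
      ext a b; simp [Matrix.diagonal_apply, he]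
    · have hne : k ≠ i := fun h => h2 (by rw [h])
      simp only [if_neg h1, if_neg h2, Matrix.conjTranspose_one, one_mul]
      ext a b; simp [Matrix.one_apply, Matrix.diagonal_apply, hne]

lemma interaction_diag {n : ℕ} (i j : Fin n) (hij : i ≠ j) :
    (ann n i)ᴴ * ann n i * ((ann n j)ᴴ * ann n j) =
      Matrix.diagonal fun f => χ (f i) * χ (f j) := by
  rw [ann_conj, ann_conj, tens_mul]
  have : (fun k => (Matrix.diagonal fun a => if k = i then χ a else 1) *
      Matrix.diagonal fun a => if k = j then χ a else 1) =
      fun k => Matrix.diagonal fun a =>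
        (if k = i then χ a else 1) * (if k = j then χ a else 1) := by
    funext k; exact Matrix.diagonal_mul_diagonal _ _
  rw [this, tens_diagonal]
  refine congrArg Matrix.diagonal ?_
  funext f
  rw [Finset.prod_mul_distrib, Finset.prod_ite_eq' Finset.univ i (fun k => χ (f k)),
    Finset.prod_ite_eq' Finset.univ j (fun k => χ (f k))]
  simp

lemma Zstr_eq {n : ℕ} (S : Finset (Fin n)) :
    Zstr S = Matrix.diagonal fun f => ∏ k ∈ S, ε (f k) := by
  rw [Zstr]
  have : (fun k => if k ∈ S then Z else 1) =
      fun k => Matrix.diagonal fun a => if k ∈ S then ε a else 1 := by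
    funext k
    by_cases h : k ∈ S
    · simp [h, Z_eq]
    · simp only [if_neg h]
      ext a b; simp [Matrix.one_apply, Matrix.diagonal_apply, h]
  rw [this, tens_diagonal]
  refine congrArg Matrix.diagonal ?_
  funext f
  rw [Finset.prod_ite_mem Finset.univ S (fun k => ε (f k)), Finset.univ_inter]

lemma prod_eps_symmDiff {n : ℕ} (S T : Finset (Fin n)) (f : Fin n → ZMod 2) :
    ∏ k ∈ S ∆ T, ε (f k) = (∏ k ∈ S, ε (f k)) * ∏ k ∈ T, ε (f k) := by
  have hS : (∏ k ∈ S, ε (f k)) =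
      (∏ k ∈ S \ T, ε (f k)) * ∏ k ∈ S ∩ T, ε (f k) := by
    rw [← Finset.prod_union (Finset.disjoint_sdiff_inter S T), Finset.sdiff_union_inter]
  have hT : (∏ k ∈ T, ε (f k)) =
      (∏ k ∈ T \ S, ε (f k)) * ∏ k ∈ S ∩ T, ε (f k) := by
    rw [Finset.inter_comm S T,
      ← Finset.prod_union (Finset.disjoint_sdiff_inter T S), Finset.sdiff_union_inter]
  have hD : S ∆ T = (S \ T) ∪ (T \ S) := by
    rw [symmDiff_def]; rfl
  rw [hD, Finset.prod_union (disjoint_sdiff_sdiff), hS, hT]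
  rw [mul_mul_mul_comm, ← Finset.prod_mul_distrib]
  simp [eps_sq]

lemma eps_sum {n : ℕ} (S : Finset (Fin n)) (f : Fin n → ZMod 2) :
    ε (∑ k ∈ S, f k) = ∏ k ∈ S, ε (f k) := by
  classical
  induction S using Finset.cons_induction with
  | empty => simp [ε]
  | cons a s ha ih => rw [Finset.sum_cons, Finset.prod_cons, eps_add, ih]

lemma mulVec_rowSet {n : ℕ} (F : Matrix (Fin n) (Fin n) (ZMod 2)) (f : Fin n → ZMod 2)
    (i : Fin n) : F.mulVec f i = ∑ k ∈ rowSet F i, f k := by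
  have h : ∀ a b : ZMod 2, a * b = if a = 1 then b else 0 := by decide
  rw [Matrix.mulVec, dotProduct, rowSet, Finset.sum_filter]
  exact Finset.sum_congr rfl fun k _ => h _ _


lemma enc_mul_diag {n : ℕ} (U : Matrix (Fin n) (Fin n) (ZMod 2))
    (d : (Fin n → ZMod 2) → ℂ) :
    encMat U * Matrix.diagonal d =
      Matrix.of fun f h => if f = U.mulVec h then d h else 0 := by
  ext f h
  rw [Matrix.mul_apply, Finset.sum_eq_single h]
  · simp [encMat, Matrix.diagonal_apply, ite_mul]
  · intro x _ hx; simp [Matrix.diagonal_apply, hx]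
  · simp

lemma enc_conj {n : ℕ} (U : Matrix (Fin n) (Fin n) (ZMod 2)) (hU : IsUnit U)
    (d : (Fin n → ZMod 2) → ℂ) :
    encMat U * Matrix.diagonal d * (encMat U)ᴴ =
      Matrix.diagonal fun f => d (U⁻¹.mulVec f) := by
  have hUd : IsUnit U.det := (Matrix.isUnit_iff_isUnit_det U).mp hU
  have h1 : U * U⁻¹ = 1 := Matrix.mul_nonsing_inv U hUd
  have h2 : U⁻¹ * U = 1 := Matrix.nonsing_inv_mul U hUd
  have key : ∀ f, U.mulVec (U⁻¹.mulVec f) = f := by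
    intro f; rw [Matrix.mulVec_mulVec, h1, Matrix.one_mulVec]
  have key2 : ∀ f, U⁻¹.mulVec (U.mulVec f) = f := by
    intro f; rw [Matrix.mulVec_mulVec, h2, Matrix.one_mulVec]
  rw [enc_mul_diag]
  ext f g
  rw [Matrix.mul_apply, Finset.sum_eq_single (U⁻¹.mulVec f)]
  · simp only [Matrix.of_apply, Matrix.conjTranspose_apply, encMat, key, if_pos rfl,
      Matrix.diagonal_apply]
    by_cases hfg : f = g
    · subst hfg; simp
    · have : ¬ g = f := fun h => hfg h.symm
      simp [hfg, this]
  · intro h _ hne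
    rw [Matrix.of_apply, if_neg, zero_mul]
    intro hf; exact hne (by rw [hf, key2])
  · intro hmem; exact absurd (Finset.mem_univ _) hmem


/-- conjugating the Jordan–Wigner interaction operator `a_i† a_i a_j† a_j` by the
permutation matrix `m_U` of a linear encoding `U ∈ GL_n(𝔽₂)` gives
`¼(I − Z_{F(i)} − Z_{F(j)} + Z_{F(i) △ F(j)})` with `F = U⁻¹`; in particular
`Z_{F(i)} Z_{F(j)} = Z_{F(i) △ F(j)}`. -/
theorem linear_encoding_interaction_operator (n : ℕ) (hn : 1 ≤ n)
    (U : Matrix (Fin n) (Fin n) (ZMod 2)) (hU : IsUnit U) :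
    ∀ i j : Fin n, i ≠ j →
      encMat U * ((ann n i)ᴴ * ann n i * ((ann n j)ᴴ * ann n j)) * (encMat U)ᴴ =
        (1 / 4 : ℂ) •
          (1 - Zstr (rowSet U⁻¹ i) - Zstr (rowSet U⁻¹ j) +
            Zstr (rowSet U⁻¹ i ∆ rowSet U⁻¹ j)) ∧
      Zstr (rowSet U⁻¹ i) * Zstr (rowSet U⁻¹ j) = Zstr (rowSet U⁻¹ i ∆ rowSet U⁻¹ j) := by
  intro i j hij
  have hZ2 : Zstr (rowSet U⁻¹ i) * Zstr (rowSet U⁻¹ j) = Zstr (rowSet U⁻¹ i ∆ rowSet U⁻¹ j) := by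
    rw [Zstr_eq, Zstr_eq, Zstr_eq, Matrix.diagonal_mul_diagonal]
    refine congrArg Matrix.diagonal ?_
    funext f
    exact (prod_eps_symmDiff _ _ f).symm
  refine ⟨?_, hZ2⟩
  rw [interaction_diag i j hij, enc_conj U hU]
  rw [Zstr_eq, Zstr_eq, Zstr_eq]
  rw [← Matrix.diagonal_one, Matrix.diagonal_sub, Matrix.diagonal_sub,
    Matrix.diagonal_add, ← Matrix.diagonal_smul]
  refine congrArg Matrix.diagonal ?_
  funext f
  show χ (U⁻¹.mulVec f i) * χ (U⁻¹.mulVec f j) = _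
  rw [mulVec_rowSet U⁻¹ f i, mulVec_rowSet U⁻¹ f j, chi_mul, eps_sum, eps_sum]
  simp [smul_eq_mul, prod_eps_symmDiff]

end FQ
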